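/- Under the stated hypotheses, Φ(λ) is an eigenvalue of S with eigenvector f(λ) for every λ ∈ G, and S does not have the single-valued extension property (SVEP): there exist a nonempty open set W ⊆ ℂ and an analytic function g : W → X with g(z) ≠ 0 and (S − z·I) g(z) = 0 for all z ∈ W. -/

import Mathlib

open Filter Topology
open scoped ContDiff

/-- if `S` has an analytic family of eigenvectors `f : G → X` with nonzero
values and non-constant analytic eigenvalue function `Φ`, then `Φ w` is an eigenvalue of
`S` with eigenvector `f w` for all `w ∈ G`, and `S` fails the single-valued extension
property: there is a nonempty open `W ⊆ ℂ` and an analytic `g : W → X` with `g z ≠ 0` and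
`(S - z) g z = 0` on `W`. -/
theorem stmt_2 (X : Type*) [NormedAddCommGroup X] [NormedSpace ℂ X] [CompleteSpace X]
    (S : X →L[ℂ] X)
    (G : Set ℂ) (hG : IsOpen G) (hGne : G.Nonempty) (hGconn : IsConnected G)
    (Φ : ℂ → ℂ) (hΦ : DifferentiableOn ℂ Φ G) (hΦnc : ∃ a ∈ G, ∃ b ∈ G, Φ a ≠ Φ b)
    (f : ℂ → X) (hf : DifferentiableOn ℂ f G)
    (hfne : ∀ w ∈ G, f w ≠ 0) (heig : ∀ w ∈ G, S (f w) = Φ w • f w) :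
    (∀ w ∈ G, f w ≠ 0 ∧ S (f w) = Φ w • f w) ∧
    ∃ W : Set ℂ, W.Nonempty ∧ IsOpen W ∧
      ∃ g : ℂ → X, DifferentiableOn ℂ g W ∧ ∀ z ∈ W, g z ≠ 0 ∧ S (g z) - z • g z = 0 := by
  refine ⟨fun w hw => ⟨hfne w hw, heig w hw⟩, ?_⟩
  have hΦan : AnalyticOnNhd ℂ Φ G := hΦ.analyticOnNhd hG
  -- find a point with nonzero derivative
  have hex : ∃ l0 ∈ G, deriv Φ l0 ≠ 0 := by
    by_contra h
    push_neg at h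
    obtain ⟨a, ha, b, hb, hab⟩ := hΦnc
    have hconst : Set.EqOn Φ (fun _ => Φ a) G := by
      apply hΦan.eqOn_of_preconnected_of_eventuallyEq
        (analyticOnNhd_const) hGconn.isPreconnected ha
      obtain ⟨ε, hε, hball⟩ := Metric.isOpen_iff.1 hG a ha
      filter_upwards [Metric.ball_mem_nhds a hε] with x hx
      have : ∀ y ∈ Metric.ball a ε, fderivWithin ℂ Φ (Metric.ball a ε) y = 0 := by
        intro y hy
        rw [fderivWithin_of_isOpen Metric.isOpen_ball hy, ← toSpanSingleton_deriv,
          h y (hball hy)]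
        ext x; simp
      exact (convex_ball a ε).is_const_of_fderivWithin_eq_zero
        (hΦ.mono hball) this hx (Metric.mem_ball_self hε)
    exact hab ((hconst ha).trans (hconst hb).symm)
  obtain ⟨l0, hl0, hd0⟩ := hex
  set c : ℂ := deriv Φ l0 with hc
  have hΦc : ContDiffAt ℂ ω Φ l0 := (hΦan l0 hl0).contDiffAt
  have hdiffat : DifferentiableAt ℂ Φ l0 := hΦ.differentiableAt (hG.mem_nhds hl0)
  set e : ℂ ≃L[ℂ] ℂ := ContinuousLinearEquiv.unitsEquivAut ℂ (Units.mk0 c hd0) with he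
  have hfd : HasFDerivAt Φ (e : ℂ →L[ℂ] ℂ) l0 := by
    have : (e : ℂ →L[ℂ] ℂ) = fderiv ℂ Φ l0 := by
      rw [← toSpanSingleton_deriv]
      ext x
      simp [he, ContinuousLinearEquiv.unitsEquivAut, mul_comm, hc]
    rw [this]
    exact hdiffat.hasFDerivAt
  have hn : (ω : WithTop ℕ∞) ≠ 0 := by simp
  set ψ : ℂ → ℂ := hΦc.localInverse hfd hn with hψ
  have hψc : ContDiffAt ℂ ω ψ (Φ l0) := hΦc.to_localInverse hfd hn
  obtain ⟨u, hu, hucd⟩ : ∃ u ∈ 𝓝 (Φ l0), ContDiffOn ℂ 1 ψ u :=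
    hψc.contDiffOn (by norm_num) (by norm_num)
  have hri : ∀ᶠ y in 𝓝 (Φ l0), Φ (ψ y) = y :=
    (hΦc.hasStrictFDerivAt' hfd hn).eventually_right_inverse
  have hψcont : ContinuousAt ψ (Φ l0) :=
    (hΦc.hasStrictFDerivAt' hfd hn).localInverse_continuousAt
  have hψim : ψ (Φ l0) = l0 := hΦc.localInverse_apply_image hfd hn
  have hmemG : ∀ᶠ y in 𝓝 (Φ l0), ψ y ∈ G := by
    have := hψcont.preimage_mem_nhds (hψim ▸ hG.mem_nhds hl0)
    exact this
  obtain ⟨W, hWsub, hWopen, hWmem⟩ :=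
    mem_nhds_iff.1 (inter_mem hu (inter_mem hri hmemG))
  refine ⟨W, ⟨Φ l0, hWmem⟩, hWopen, f ∘ ψ, ?_, ?_⟩
  · apply hf.comp ((hucd.differentiableOn one_ne_zero).mono fun y hy => (hWsub hy).1)
    exact fun y hy => (hWsub hy).2.2
  · intro z hz
    have hzG : ψ z ∈ G := (hWsub hz).2.2
    have hzr : Φ (ψ z) = z := (hWsub hz).2.1
    refine ⟨hfne _ hzG, ?_⟩
    simp only [Function.comp_apply]
    rw [heig _ hzG, hzr, sub_self]
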